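/- Let ε, k_x, ν > 0 and k_y ≠ 0 be real, and let R_−(iη) = i(k_x/k_y)η − i(k_x/(ε k_y²))(1 − √(1 − (2εk_y/k_x²)η + 2iνε k_y²/k_x²)). Then for all x ≥ 0 and all real η, |e^{R_−(iη)·x}| ≤ 1. -/

import Mathlib

open Complex

lemma aux_sqrt_im_nonneg (z : ℂ) (hz : 0 ≤ z.im) (hz0 : z ≠ 0) :
    0 ≤ (z ^ ((1 : ℂ)/2)).im := by
  rw [Complex.cpow_def_of_ne_zero hz0, Complex.exp_im]
  have him2 : (Complex.log z * ((1:ℂ)/2)).im = Complex.arg z / 2 := by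
    have h : ((1:ℂ)/2) = ((1/2:ℝ):ℂ) := by norm_num
    rw [h, Complex.mul_im, Complex.ofReal_re, Complex.ofReal_im, Complex.log_im]; ring
  rw [him2]
  apply mul_nonneg (Real.exp_nonneg _)
  have h1 : (0:ℝ) ≤ Complex.arg z := Complex.arg_nonneg_iff.2 hz
  have h2 : Complex.arg z ≤ Real.pi := Complex.arg_le_pi z
  exact Real.sin_nonneg_of_nonneg_of_le_pi (by linarith) (by linarith [Real.pi_pos])

theorem stmt_7 (ε kx ky ν : ℝ) (hε : 0 < ε) (hkx : 0 < kx) (hky : ky ≠ 0) (hν : 0 < ν)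
    (η : ℝ)
    (Rminus : ℂ)
    (hm : Rminus = I * (kx / ky : ℝ) * (η : ℂ) - I * ((kx / (ε * ky ^ 2) : ℝ) : ℂ) *
      (1 - ((1 : ℂ) - ((2 * ε * ky / kx ^ 2 : ℝ) : ℂ) * (η : ℂ)
        + 2 * (ν : ℂ) * (ε : ℂ) * (ky : ℂ) ^ 2 / (kx : ℂ) ^ 2 * I) ^ ((1 : ℂ) / 2)))
    (x : ℝ) (hx : 0 ≤ x) :
    ‖Complex.exp (Rminus * (x : ℂ))‖ ≤ 1 := by
  set z : ℂ := (1 : ℂ) - ((2 * ε * ky / kx ^ 2 : ℝ) : ℂ) * (η : ℂ)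
      + 2 * (ν : ℂ) * (ε : ℂ) * (ky : ℂ) ^ 2 / (kx : ℂ) ^ 2 * I with hz
  have hz2 : z = ((1 - (2 * ε * ky / kx ^ 2) * η : ℝ) : ℂ)
      + ((2 * ν * ε * ky ^ 2 / kx ^ 2 : ℝ) : ℂ) * I := by
    rw [hz]; push_cast; ring
  have him : z.im = 2 * ν * ε * ky ^ 2 / kx ^ 2 := by
    rw [hz2]
    simp only [Complex.add_im, Complex.mul_im, Complex.ofReal_re, Complex.ofReal_im,
      Complex.I_re, Complex.I_im]
    ring
  have himpos : 0 < z.im := by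
    rw [him]; positivity
  have hz0 : z ≠ 0 := by
    intro h; rw [h] at himpos; simp at himpos
  have hw : 0 ≤ (z ^ ((1 : ℂ)/2)).im := aux_sqrt_im_nonneg z himpos.le hz0
  set w : ℂ := z ^ ((1 : ℂ)/2) with hwdef
  have hre : Rminus.re = -(kx / (ε * ky ^ 2)) * w.im := by
    rw [hm]
    simp only [Complex.sub_re, Complex.mul_re, Complex.mul_im, Complex.one_re,
      Complex.one_im, Complex.sub_im, Complex.I_re, Complex.I_im,
      Complex.ofReal_re, Complex.ofReal_im]
    ring
  have hble : (0:ℝ) < kx / (ε * ky ^ 2) := by positivity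
  have hRre : Rminus.re ≤ 0 := by
    rw [hre]
    have : 0 ≤ (kx / (ε * ky ^ 2)) * w.im := mul_nonneg hble.le hw
    linarith
  rw [Complex.norm_exp]
  have h1 : (Rminus * (x : ℂ)).re = Rminus.re * x := by simp
  rw [h1]
  have h2 : Rminus.re * x ≤ 0 := mul_nonpos_of_nonpos_of_nonneg hRre hx
  calc Real.exp (Rminus.re * x) ≤ Real.exp 0 := Real.exp_le_exp.2 h2
    _ = 1 := Real.exp_zero
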